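/- In W(B_n) with the elements w_k^± = w₀ w̃_k and w₀ σ_{ε₁} w̃_k, the τ-invariants satisfy: τ(w_k⁺) = τ(w_{k+1}⁻) = Π ∖ {α_{n-k}} for k = 1, ..., n-1, τ(w_n⁺) = Π, and τ(w_1⁻) = Π ∖ {α_n}, where τ(w) = {α ∈ Π : w(α) < 0}. -/
import Mathlib


open scoped BigOperators

/-- The standard basis vector `ε_{i+1}` (0-indexed `i`) of `ℚⁿ`. -/
def eN (n : ℕ) (i : ℕ) : Fin n → ℚ := fun j => if (j : ℕ) = i then 1 else 0

/-- The positive roots of type `B_n`: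
`ε_i - ε_j`, `ε_i + ε_j` (`i < j`) and `ε_i`. -/
def PosB (n : ℕ) : Set (Fin n → ℚ) :=
  {v | (∃ i, i < n ∧ v = eN n i) ∨
    ∃ i j, i < j ∧ j < n ∧ (v = eN n i - eN n j ∨ v = eN n i + eN n j)}

/-- The length of a Weyl group element, i.e. the number of positive roots it
sends to negative roots. -/
noncomputable def lenB (n : ℕ) (w : (Fin n → ℚ) → (Fin n → ℚ)) : ℕ :=
  Set.ncard {β | β ∈ PosB n ∧ -(w β) ∈ PosB n}

/-- The linear action on `ℚⁿ` of the cycle `(1, 2, …, i+1)` (1-indexed) on the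
coordinates: it sends `ε_a ↦ ε_{π(a)}` where `π = Fin.cycleRange i`. -/
def cycAct (n : ℕ) (i : Fin n) : (Fin n → ℚ) → (Fin n → ℚ) :=
  fun v j => v ((Fin.cycleRange i)⁻¹ j)

/-- The longest element `w₀ = -Id` of `W(B_n)`. -/
def w0B (n : ℕ) : (Fin n → ℚ) → (Fin n → ℚ) := fun v => -v

/-- The reflection `σ_{ε₁}` in `ε₁`, negating the first coordinate. -/
def sigB (n : ℕ) : (Fin n → ℚ) → (Fin n → ℚ) := fun v j => if (j : ℕ) = 0 then -(v j) else v j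

/-- `w_k⁺ = w₀ ∘ w̃_k`, where `w̃_k` is the cycle `(1, 2, …, n-k+1)`,
realized with `i = ⟨n - k, _⟩`. -/
def wplus (n : ℕ) (i : Fin n) : (Fin n → ℚ) → (Fin n → ℚ) := w0B n ∘ cycAct n i

/-- `w_k⁻ = w₀ ∘ σ_{ε₁} ∘ w̃_k`. -/
def wminus (n : ℕ) (i : Fin n) : (Fin n → ℚ) → (Fin n → ℚ) := w0B n ∘ sigB n ∘ cycAct n i

/-- The simple root `α_i` of `B_n` (1-indexed): `α_i = ε_i - ε_{i+1}` for
`i < n` and `α_n = ε_n`. -/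
def simpleRoot (n i : ℕ) : Fin n → ℚ := if i < n then eN n (i - 1) - eN n i else eN n (n - 1)

/-- The set `Π` of simple roots of `B_n`. -/
def PiB (n : ℕ) : Set (Fin n → ℚ) := {v | ∃ i, 1 ≤ i ∧ i ≤ n ∧ v = simpleRoot n i}

/-- The `τ`-invariant `τ(w) = {α ∈ Π : w(α) < 0}`. -/
def tauB (n : ℕ) (w : (Fin n → ℚ) → (Fin n → ℚ)) : Set (Fin n → ℚ) :=
  {α | α ∈ PiB n ∧ -(w α) ∈ PosB n}

lemma posB_single {n a : ℕ} (h : a < n) : eN n a ∈ PosB n := Or.inl ⟨a, h, rfl⟩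

lemma posB_sub {n a b : ℕ} (h : a < b) (h2 : b < n) : eN n a - eN n b ∈ PosB n :=
  Or.inr ⟨a, b, h, h2, Or.inl rfl⟩

lemma posB_add {n a b : ℕ} (h : a < b) (h2 : b < n) : eN n a + eN n b ∈ PosB n :=
  Or.inr ⟨a, b, h, h2, Or.inr rfl⟩

lemma posB_lead {n : ℕ} {v : Fin n → ℚ} (h : v ∈ PosB n) :
    ∃ i : Fin n, v i = 1 ∧ ∀ j : Fin n, (j : ℕ) < (i : ℕ) → v j = 0 := by
  rcases h with ⟨i, hi, rfl⟩ | ⟨i, j, hij, hj, rfl | rfl⟩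
  · refine ⟨⟨i, hi⟩, by simp [eN], fun k hk => ?_⟩
    have hk' : (k : ℕ) < i := hk
    simp only [eN]; rw [if_neg (by omega)]
  · refine ⟨⟨i, by omega⟩, ?_, fun k hk => ?_⟩
    · show eN n i ⟨i, _⟩ - eN n j ⟨i, _⟩ = 1
      simp only [eN]
      rw [if_pos trivial, if_neg (by omega)]
      norm_num
    · have hk' : (k : ℕ) < i := hk
      show eN n i k - eN n j k = 0
      simp only [eN]; rw [if_neg (by omega), if_neg (by omega)]; norm_num
  · refine ⟨⟨i, by omega⟩, ?_, fun k hk => ?_⟩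
    · show eN n i ⟨i, _⟩ + eN n j ⟨i, _⟩ = 1
      simp only [eN]
      rw [if_pos trivial, if_neg (by omega)]
      norm_num
    · have hk' : (k : ℕ) < i := hk
      show eN n i k + eN n j k = 0
      simp only [eN]; rw [if_neg (by omega), if_neg (by omega)]; norm_num

lemma posB_not_neg {n : ℕ} {v : Fin n → ℚ} (h : v ∈ PosB n) : -v ∉ PosB n := by
  intro h2
  obtain ⟨i, hi1, hi2⟩ := posB_lead h
  obtain ⟨j, hj1, hj2⟩ := posB_lead h2
  simp only [Pi.neg_apply] at hj1 hj2
  rcases lt_trichotomy (i : ℕ) (j : ℕ) with hc | hc | hc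
  · have := hj2 i hc; rw [hi1] at this; norm_num at this
  · have : i = j := Fin.ext hc
    subst this; rw [hi1] at hj1; norm_num at hj1
  · have := hi2 j hc; rw [this] at hj1; norm_num at hj1

lemma cycAct_eN (N M : ℕ) (hM : M < N + 1) (a : ℕ) (ha : a < N + 1) :
    cycAct (N + 1) ⟨M, hM⟩ (eN (N + 1) a) =
      eN (N + 1) (if a < M then a + 1 else if a = M then 0 else a) := by
  funext j
  simp only [cycAct, eN]
  have h3 : ((Fin.cycleRange (⟨M, hM⟩ : Fin (N + 1)) ⟨a, ha⟩ : Fin (N + 1)) : ℕ) =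
      if a < M then a + 1 else if a = M then 0 else a := by
    by_cases hle : a ≤ M
    · rw [Fin.coe_cycleRange_of_le (show (⟨a, ha⟩ : Fin (N + 1)) ≤ ⟨M, hM⟩ from hle)]
      by_cases he : a = M
      · rw [if_pos (by exact Fin.ext he), if_neg (by omega), if_pos he]
      · rw [if_neg (show (⟨a, ha⟩ : Fin (N+1)) ≠ ⟨M, hM⟩ from fun hh => he (by injection hh)),
          if_pos (by omega)]
    · rw [Fin.cycleRange_of_gt (show (⟨M, hM⟩ : Fin (N + 1)) < ⟨a, ha⟩ from by
        simp [Fin.lt_def]; omega)]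
      rw [if_neg (by omega), if_neg (by omega)]
  have key : (((Fin.cycleRange (⟨M, hM⟩ : Fin (N + 1)))⁻¹ j : Fin (N + 1)) : ℕ) = a ↔
      (j : ℕ) = (if a < M then a + 1 else if a = M then 0 else a) := by
    rw [← h3]
    constructor
    · intro h
      have : (Fin.cycleRange (⟨M, hM⟩ : Fin (N + 1)))⁻¹ j = ⟨a, ha⟩ := Fin.ext h
      rw [Equiv.Perm.inv_eq_iff_eq] at this
      exact congrArg Fin.val this
    · intro h
      have : j = Fin.cycleRange (⟨M, hM⟩ : Fin (N + 1)) ⟨a, ha⟩ := Fin.ext h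
      rw [← Equiv.Perm.inv_eq_iff_eq] at this
      rw [this]
  exact if_congr key rfl rfl

lemma cycAct_sub (n : ℕ) (m : Fin n) (u v : Fin n → ℚ) :
    cycAct n m (u - v) = cycAct n m u - cycAct n m v := rfl

lemma sigB_sub (n : ℕ) (u v : Fin n → ℚ) : sigB n (u - v) = sigB n u - sigB n v := by
  funext j; simp only [sigB, Pi.sub_apply]; split <;> ring

lemma sigB_eN (n a : ℕ) (ha : 1 ≤ a) : sigB n (eN n a) = eN n a := by
  funext j; simp only [sigB, eN]
  split_ifs with h1 h2 <;> first | omega | norm_num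

lemma sigB_eN0 (n : ℕ) : sigB n (eN n 0) = -(eN n 0) := by
  funext j; simp only [sigB, eN, Pi.neg_apply]
  split_ifs with h1 <;> simp [h1]

lemma cyc_pos (N M : ℕ) (hM : M < N + 1) (i : ℕ) (h1 : 1 ≤ i) (h2 : i ≤ N + 1)
    (hne : i ≠ M) : cycAct (N + 1) ⟨M, hM⟩ (simpleRoot (N + 1) i) ∈ PosB (N + 1) := by
  by_cases hi : i < N + 1
  · rw [simpleRoot, if_pos hi, cycAct_sub, cycAct_eN _ _ _ (i - 1) (by omega),
      cycAct_eN _ _ _ i (by omega)]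
    rcases lt_or_gt_of_ne hne with hc | hc
    · rw [show (if i - 1 < M then i - 1 + 1 else if i - 1 = M then 0 else i - 1) = i by
          split_ifs <;> omega,
        show (if i < M then i + 1 else if i = M then 0 else i) = i + 1 by
          split_ifs <;> omega]
      exact posB_sub (by omega) (by omega)
    · by_cases hd : i - 1 = M
      · rw [show (if i - 1 < M then i - 1 + 1 else if i - 1 = M then 0 else i - 1) = 0 by
            split_ifs <;> omega,
          show (if i < M then i + 1 else if i = M then 0 else i) = i by
            split_ifs <;> omega]
        exact posB_sub (by omega) hi
      · rw [show (if i - 1 < M then i - 1 + 1 else if i - 1 = M then 0 else i - 1) = i - 1 by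
            split_ifs <;> omega,
          show (if i < M then i + 1 else if i = M then 0 else i) = i by
            split_ifs <;> omega]
        exact posB_sub (by omega) hi
  · rw [simpleRoot, if_neg (by omega), show N + 1 - 1 = N from rfl,
      cycAct_eN _ _ _ N (by omega)]
    exact posB_single (by split_ifs <;> omega)

lemma cyc_neg (N M : ℕ) (hM : M < N + 1) (hM1 : 1 ≤ M) :
    cycAct (N + 1) ⟨M, hM⟩ (simpleRoot (N + 1) M) ∉ PosB (N + 1) := by
  rw [simpleRoot, if_pos hM, cycAct_sub, cycAct_eN _ _ _ (M - 1) (by omega),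
    cycAct_eN _ _ _ M (by omega),
    show (if M - 1 < M then M - 1 + 1 else if M - 1 = M then 0 else M - 1) = M by
      split_ifs <;> omega,
    show (if M < M then M + 1 else if M = M then 0 else M) = 0 by split_ifs <;> omega]
  intro h
  exact posB_not_neg (posB_sub (show 0 < M from hM1) hM) (by rwa [neg_sub])

lemma sig_cyc_pos (N M : ℕ) (hM : M < N + 1) (i : ℕ) (h1 : 1 ≤ i) (h2 : i ≤ N + 1)
    (hne : i ≠ M + 1) :
    sigB (N + 1) (cycAct (N + 1) ⟨M, hM⟩ (simpleRoot (N + 1) i)) ∈ PosB (N + 1) := by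
  by_cases hi : i < N + 1
  · rw [simpleRoot, if_pos hi, cycAct_sub, cycAct_eN _ _ _ (i - 1) (by omega),
      cycAct_eN _ _ _ i (by omega)]
    rcases lt_trichotomy i M with hc | hc | hc
    · rw [show (if i - 1 < M then i - 1 + 1 else if i - 1 = M then 0 else i - 1) = i by
          split_ifs <;> omega,
        show (if i < M then i + 1 else if i = M then 0 else i) = i + 1 by
          split_ifs <;> omega,
        sigB_sub, sigB_eN _ _ h1, sigB_eN _ _ (by omega)]
      exact posB_sub (by omega) (by omega)
    · rw [show (if i - 1 < M then i - 1 + 1 else if i - 1 = M then 0 else i - 1) = i by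
          split_ifs <;> omega,
        show (if i < M then i + 1 else if i = M then 0 else i) = 0 by
          split_ifs <;> omega,
        sigB_sub, sigB_eN _ _ h1, sigB_eN0, sub_neg_eq_add,
        add_comm (eN (N + 1) i) (eN (N + 1) 0)]
      exact posB_add (by omega) hi
    · rw [show (if i - 1 < M then i - 1 + 1 else if i - 1 = M then 0 else i - 1) = i - 1 by
          split_ifs <;> omega,
        show (if i < M then i + 1 else if i = M then 0 else i) = i by
          split_ifs <;> omega,
        sigB_sub, sigB_eN _ _ (by omega), sigB_eN _ _ (by omega)]
      exact posB_sub (by omega) hi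
  · rw [simpleRoot, if_neg (by omega), show N + 1 - 1 = N from rfl,
      cycAct_eN _ _ _ N (by omega),
      show (if N < M then N + 1 else if N = M then 0 else N) = N by split_ifs <;> omega,
      sigB_eN _ _ (by omega)]
    exact posB_single (by omega)

lemma sig_cyc_neg (N M : ℕ) (hM : M < N + 1) :
    sigB (N + 1) (cycAct (N + 1) ⟨M, hM⟩ (simpleRoot (N + 1) (M + 1))) ∉ PosB (N + 1) := by
  by_cases hi : M + 1 < N + 1
  · rw [simpleRoot, if_pos hi, cycAct_sub, show M + 1 - 1 = M from rfl,
      cycAct_eN _ _ _ M (by omega), cycAct_eN _ _ _ (M + 1) (by omega),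
      show (if M < M then M + 1 else if M = M then 0 else M) = 0 by split_ifs <;> omega,
      show (if M + 1 < M then M + 1 + 1 else if M + 1 = M then 0 else M + 1) = M + 1 by
        split_ifs <;> omega,
      sigB_sub, sigB_eN0, sigB_eN _ _ (by omega)]
    intro h
    refine posB_not_neg (posB_add (show 0 < M + 1 by omega) hi) ?_
    rwa [show -(eN (N + 1) 0 + eN (N + 1) (M + 1))
        = -eN (N + 1) 0 - eN (N + 1) (M + 1) by ring]
  · have hMN : M = N := by omega
    rw [simpleRoot, if_neg (by omega), show N + 1 - 1 = N from rfl,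
      cycAct_eN _ _ _ N (by omega),
      show (if N < M then N + 1 else if N = M then 0 else N) = 0 by split_ifs <;> omega,
      sigB_eN0]
    exact posB_not_neg (posB_single (show 0 < N + 1 by omega))

lemma neg_wplus (n : ℕ) (m : Fin n) (α : Fin n → ℚ) :
    -(wplus n m α) = cycAct n m α := neg_neg _

lemma neg_wminus (n : ℕ) (m : Fin n) (α : Fin n → ℚ) :
    -(wminus n m α) = sigB n (cycAct n m α) := neg_neg _

lemma tau_wplus (N M : ℕ) (hM : M < N + 1) (hM1 : 1 ≤ M) :
    tauB (N + 1) (wplus (N + 1) ⟨M, hM⟩) = PiB (N + 1) \ {simpleRoot (N + 1) M} := by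
  ext v
  constructor
  · rintro ⟨hPi, hpos⟩
    refine ⟨hPi, fun hv => ?_⟩
    rw [Set.mem_singleton_iff] at hv
    subst hv
    rw [neg_wplus] at hpos
    exact cyc_neg N M hM hM1 hpos
  · rintro ⟨⟨i, hi1, hi2, rfl⟩, hne⟩
    refine ⟨⟨i, hi1, hi2, rfl⟩, ?_⟩
    rw [neg_wplus]
    refine cyc_pos N M hM i hi1 hi2 fun h => ?_
    exact hne (by rw [Set.mem_singleton_iff]; exact congrArg (simpleRoot (N + 1)) h)

lemma tau_wplus0 (N : ℕ) (h0 : (0 : ℕ) < N + 1) :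
    tauB (N + 1) (wplus (N + 1) ⟨0, h0⟩) = PiB (N + 1) := by
  ext v
  constructor
  · rintro ⟨hPi, _⟩; exact hPi
  · rintro ⟨i, hi1, hi2, rfl⟩
    exact ⟨⟨i, hi1, hi2, rfl⟩, by
      rw [neg_wplus]; exact cyc_pos N 0 h0 i hi1 hi2 (by omega)⟩

lemma tau_wminus (N M : ℕ) (hM : M < N + 1) :
    tauB (N + 1) (wminus (N + 1) ⟨M, hM⟩) = PiB (N + 1) \ {simpleRoot (N + 1) (M + 1)} := by
  ext v
  constructor
  · rintro ⟨hPi, hpos⟩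
    refine ⟨hPi, fun hv => ?_⟩
    rw [Set.mem_singleton_iff] at hv
    subst hv
    rw [neg_wminus] at hpos
    exact sig_cyc_neg N M hM hpos
  · rintro ⟨⟨i, hi1, hi2, rfl⟩, hne⟩
    refine ⟨⟨i, hi1, hi2, rfl⟩, ?_⟩
    rw [neg_wminus]
    refine sig_cyc_pos N M hM i hi1 hi2 fun h => ?_
    exact hne (by rw [Set.mem_singleton_iff]; exact congrArg (simpleRoot (N + 1)) h)

/-- `τ(w_k⁺) = τ(w_{k+1}⁻) = Π ∖ {α_{n-k}}` for `k = 1, …, n-1`,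
`τ(w_n⁺) = Π`, and `τ(w_1⁻) = Π ∖ {α_n}`. -/
theorem stmt16 (n : ℕ) (hn : 1 ≤ n) :
    (∀ k (_hk1 : 1 ≤ k) (_hk2 : k ≤ n - 1),
      tauB n (wplus n ⟨n - k, by omega⟩) = PiB n \ {simpleRoot n (n - k)} ∧
      tauB n (wminus n ⟨n - (k + 1), by omega⟩) = PiB n \ {simpleRoot n (n - k)}) ∧
    tauB n (wplus n ⟨n - n, by omega⟩) = PiB n ∧
    tauB n (wminus n ⟨n - 1, by omega⟩) = PiB n \ {simpleRoot n n} := by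
  obtain ⟨N, rfl⟩ : ∃ N, n = N + 1 := ⟨n - 1, by omega⟩
  refine ⟨fun k hk1 hk2 => ⟨?_, ?_⟩, ?_, ?_⟩
  · exact tau_wplus N (N + 1 - k) (by omega) (by omega)
  · have h := tau_wminus N (N + 1 - (k + 1)) (by omega)
    rw [show N + 1 - (k + 1) + 1 = N + 1 - k by omega] at h
    exact h
  · rw [show (⟨N + 1 - (N + 1), by omega⟩ : Fin (N + 1)) = ⟨0, by omega⟩ from
      Fin.ext (Nat.sub_self _)]
    exact tau_wplus0 N (by omega)
  · have h := tau_wminus N (N + 1 - 1) (by omega)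
    rw [show N + 1 - 1 + 1 = N + 1 by omega] at h
    exact h
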